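/- Let n ≥ 1 and let B be a connected chordal building set on [n]. Then in ℤ[t] one has ∑_{≼ a B-tree} t^{des(≼)} = ∑_{w ∈ S_n(B)} t^{des(w)}, where the left sum is over all B-trees ≼ on [n]. (Both sides equal the h-polynomial of the nestohedron P_B.) -/

import Mathlib

open Classical Polynomial

/-- The prefix set `{w(1), …, w(i)}`. -/
def prefixSet {n : ℕ} (w : Equiv.Perm (Fin n)) (i : Fin n) : Finset (Fin n) :=
  (Finset.univ.filter fun j => j ≤ i).image w

/-- A building set on `[n]`. -/
def IsBuildingSet {n : ℕ} (B : Finset (Finset (Fin n))) : Prop :=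
  (∀ I ∈ B, I.Nonempty) ∧
  (∀ I ∈ B, ∀ J ∈ B, (I ∩ J).Nonempty → I ∪ J ∈ B) ∧
  (∀ i : Fin n, {i} ∈ B)

/-- A chordal building set. -/
def IsChordal {n : ℕ} (B : Finset (Finset (Fin n))) : Prop :=
  ∀ I ∈ B, ∀ m ∈ I, I.filter (fun i => m ≤ i) ∈ B

/-- `w` is a `B`-permutation. -/
def IsBPerm {n : ℕ} (B : Finset (Finset (Fin n))) (w : Equiv.Perm (Fin n)) : Prop :=
  ∀ i : Fin n, ∃ I ∈ B, I ⊆ prefixSet w i ∧ w i ∈ I ∧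
    ∃ m ∈ I, ∀ x ∈ prefixSet w i, x ≤ m

/-- Number of descents of a permutation. -/
def des {n : ℕ} (w : Equiv.Perm (Fin n)) : ℕ :=
  (Finset.univ.filter fun i : Fin n =>
    ∃ j : Fin n, (j : ℕ) = (i : ℕ) + 1 ∧ w j < w i).card

/-- The down-set `T_{≤ i} = {j : j ≼ i}` of an element `i` with respect to
a relation encoded by the finset `R` of pairs `(a, b)` with `a ≼ b`. -/
def downSet {n : ℕ} (R : Finset (Fin n × Fin n)) (i : Fin n) : Finset (Fin n) :=
  Finset.univ.filter fun j => (j, i) ∈ R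

/-- `R` (a finset of pairs, `(a,b) ∈ R` meaning `a ≼ b`) encodes a `B`-tree:
a partial order on `[n]` with a greatest element, totally ordered up-sets,
down-sets in `B`, and no union of down-sets of `≥ 2` pairwise incomparable
elements lying in `B`. -/
def IsBTree {n : ℕ} (B : Finset (Finset (Fin n))) (R : Finset (Fin n × Fin n)) : Prop :=
  (∀ a : Fin n, (a, a) ∈ R) ∧
  (∀ a b : Fin n, (a, b) ∈ R → (b, a) ∈ R → a = b) ∧
  (∀ a b c : Fin n, (a, b) ∈ R → (b, c) ∈ R → (a, c) ∈ R) ∧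
  (∃ g : Fin n, ∀ a : Fin n, (a, g) ∈ R) ∧
  (∀ a b c : Fin n, (a, b) ∈ R → (a, c) ∈ R → (b, c) ∈ R ∨ (c, b) ∈ R) ∧
  (∀ i : Fin n, downSet R i ∈ B) ∧
  (∀ S : Finset (Fin n), 2 ≤ S.card →
    (∀ a ∈ S, ∀ b ∈ S, a ≠ b → (a, b) ∉ R ∧ (b, a) ∉ R) →
    S.biUnion (downSet R) ∉ B)

/-- Number of descents of a tree-poset: covering pairs `a ⋖ b` with `a > b`. -/
def desTree {n : ℕ} (R : Finset (Fin n × Fin n)) : ℕ :=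
  (Finset.univ.filter fun p : Fin n × Fin n =>
    (p.1, p.2) ∈ R ∧ p.1 ≠ p.2 ∧
    (∀ c : Fin n, (p.1, c) ∈ R → (c, p.2) ∈ R → c = p.1 ∨ c = p.2) ∧
    p.2 < p.1).card

namespace BTreeProof

variable {n : ℕ}

/-- The tree relation associated to a permutation. -/
def Rel (B : Finset (Finset (Fin n))) (w : Equiv.Perm (Fin n)) :
    Finset (Fin n × Fin n) :=
  Finset.univ.filter fun p =>
    ∃ I ∈ B, I ⊆ prefixSet w (w.symm p.2) ∧ p.2 ∈ I ∧ p.1 ∈ I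

lemma mem_Rel {B : Finset (Finset (Fin n))} {w : Equiv.Perm (Fin n)} {a b : Fin n} :
    (a, b) ∈ Rel B w ↔ ∃ I ∈ B, I ⊆ prefixSet w (w.symm b) ∧ b ∈ I ∧ a ∈ I := by
  simp [Rel]

lemma mem_prefixSet {w : Equiv.Perm (Fin n)} {x : Fin n} {i : Fin n} :
    x ∈ prefixSet w i ↔ w.symm x ≤ i := by
  simp only [prefixSet, Finset.mem_image, Finset.mem_filter, Finset.mem_univ, true_and]
  constructor
  · rintro ⟨j, hj, rfl⟩; simpa using hj
  · intro h; exact ⟨w.symm x, h, w.apply_symm_apply x⟩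

lemma self_mem_prefixSet {w : Equiv.Perm (Fin n)} (i : Fin n) :
    w i ∈ prefixSet w i := by
  rw [mem_prefixSet]; simp

lemma prefixSet_nonempty (w : Equiv.Perm (Fin n)) (i : Fin n) :
    (prefixSet w i).Nonempty := ⟨w i, self_mem_prefixSet i⟩

lemma rel_pos_le {B : Finset (Finset (Fin n))} {w : Equiv.Perm (Fin n)} {a b : Fin n}
    (h : (a, b) ∈ Rel B w) : w.symm a ≤ w.symm b := by
  obtain ⟨I, _, hsub, _, ha⟩ := mem_Rel.mp h
  exact mem_prefixSet.mp (hsub ha)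

lemma rel_refl {B : Finset (Finset (Fin n))} (hB : IsBuildingSet B)
    (w : Equiv.Perm (Fin n)) (a : Fin n) : (a, a) ∈ Rel B w := by
  refine mem_Rel.mpr ⟨{a}, hB.2.2 a, ?_, by simp, by simp⟩
  intro x hx
  rw [Finset.mem_singleton] at hx
  subst hx
  rw [mem_prefixSet]

lemma rel_antisymm {B : Finset (Finset (Fin n))} {w : Equiv.Perm (Fin n)} {a b : Fin n}
    (h1 : (a, b) ∈ Rel B w) (h2 : (b, a) ∈ Rel B w) : a = b := by
  have := le_antisymm (rel_pos_le h1) (rel_pos_le h2)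
  have := congrArg w this
  simpa using this

lemma rel_trans {B : Finset (Finset (Fin n))} (hB : IsBuildingSet B)
    {w : Equiv.Perm (Fin n)} {a b c : Fin n}
    (h1 : (a, b) ∈ Rel B w) (h2 : (b, c) ∈ Rel B w) : (a, c) ∈ Rel B w := by
  obtain ⟨I, hI, hIsub, hbI, haI⟩ := mem_Rel.mp h1
  obtain ⟨J, hJ, hJsub, hcJ, hbJ⟩ := mem_Rel.mp h2
  have hle : w.symm b ≤ w.symm c := rel_pos_le h2
  have hIsub' : I ⊆ prefixSet w (w.symm c) := fun x hx => by
    rw [mem_prefixSet]; exact le_trans (mem_prefixSet.mp (hIsub hx)) hle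
  have hmem : I ∪ J ∈ B := hB.2.1 I hI J hJ ⟨b, Finset.mem_inter.mpr ⟨hbI, hbJ⟩⟩
  exact mem_Rel.mpr ⟨I ∪ J, hmem, Finset.union_subset hIsub' hJsub,
    Finset.mem_union_right _ hcJ, Finset.mem_union_left _ haI⟩

lemma rel_upchain {B : Finset (Finset (Fin n))} (hB : IsBuildingSet B)
    {w : Equiv.Perm (Fin n)} {a b c : Fin n}
    (h1 : (a, b) ∈ Rel B w) (h2 : (a, c) ∈ Rel B w) :
    (b, c) ∈ Rel B w ∨ (c, b) ∈ Rel B w := by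
  rcases le_total (w.symm b) (w.symm c) with hle | hle
  · left
    obtain ⟨I, hI, hIsub, hbI, haI⟩ := mem_Rel.mp h1
    obtain ⟨J, hJ, hJsub, hcJ, haJ⟩ := mem_Rel.mp h2
    have hIsub' : I ⊆ prefixSet w (w.symm c) := fun x hx => by
      rw [mem_prefixSet]; exact le_trans (mem_prefixSet.mp (hIsub hx)) hle
    have hmem : I ∪ J ∈ B := hB.2.1 I hI J hJ ⟨a, Finset.mem_inter.mpr ⟨haI, haJ⟩⟩
    exact mem_Rel.mpr ⟨I ∪ J, hmem, Finset.union_subset hIsub' hJsub,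
      Finset.mem_union_right _ hcJ, Finset.mem_union_left _ hbI⟩
  · right
    obtain ⟨I, hI, hIsub, hbI, haI⟩ := mem_Rel.mp h1
    obtain ⟨J, hJ, hJsub, hcJ, haJ⟩ := mem_Rel.mp h2
    have hJsub' : J ⊆ prefixSet w (w.symm b) := fun x hx => by
      rw [mem_prefixSet]; exact le_trans (mem_prefixSet.mp (hJsub hx)) hle
    have hmem : I ∪ J ∈ B := hB.2.1 I hI J hJ ⟨a, Finset.mem_inter.mpr ⟨haI, haJ⟩⟩
    exact mem_Rel.mpr ⟨I ∪ J, hmem, Finset.union_subset hIsub hJsub',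
      Finset.mem_union_left _ hbI, Finset.mem_union_right _ hcJ⟩

/-- A union of sets of `B` sharing a common point is in `B`. -/
lemma biUnion_mem {B : Finset (Finset (Fin n))} (hB : IsBuildingSet B) {b : Fin n}
    {F : Finset (Finset (Fin n))} (hFB : F ⊆ B) (hbF : ∀ I ∈ F, b ∈ I)
    (hne : F.Nonempty) : F.biUnion id ∈ B := by
  induction hne using Finset.Nonempty.cons_induction with
  | singleton a => simpa using hFB (by simp)
  | cons a s ha hs ih =>
      have hsB : s ⊆ B := fun I hI => hFB (Finset.mem_cons_of_mem hI)
      have hbs : ∀ I ∈ s, b ∈ I := fun I hI => hbF I (Finset.mem_cons_of_mem hI)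
      have h1 : s.biUnion id ∈ B := ih hsB hbs
      have h2 : a ∈ B := hFB (Finset.mem_cons_self a s)
      have hint : (a ∩ s.biUnion id).Nonempty := by
        refine ⟨b, Finset.mem_inter.mpr ⟨hbF a (Finset.mem_cons_self a s), ?_⟩⟩
        obtain ⟨I, hI⟩ := hs
        exact Finset.mem_biUnion.mpr ⟨I, hI, hbs I hI⟩
      have := hB.2.1 a h2 (s.biUnion id) h1 hint
      -- (cons a s).biUnion id = a ∪ s.biUnion id
      rwa [show (Finset.cons a s ha).biUnion id = a ∪ s.biUnion id by
        ext x; simp]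

lemma downSet_Rel_eq {B : Finset (Finset (Fin n))} {w : Equiv.Perm (Fin n)} (b : Fin n) :
    downSet (Rel B w) b
      = (B.filter fun I => I ⊆ prefixSet w (w.symm b) ∧ b ∈ I).biUnion id := by
  ext x
  simp only [downSet, Finset.mem_filter, Finset.mem_univ, true_and, mem_Rel,
    Finset.mem_biUnion, id]
  constructor
  · rintro ⟨I, hI, hsub, hbI, hxI⟩; exact ⟨I, ⟨hI, hsub, hbI⟩, hxI⟩
  · rintro ⟨I, ⟨hI, hsub, hbI⟩, hxI⟩; exact ⟨I, hI, hsub, hbI, hxI⟩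

lemma downSet_Rel_mem {B : Finset (Finset (Fin n))} (hB : IsBuildingSet B)
    {w : Equiv.Perm (Fin n)} (b : Fin n) : downSet (Rel B w) b ∈ B := by
  rw [downSet_Rel_eq]
  refine biUnion_mem hB (b := b) (Finset.filter_subset _ _) ?_ ?_
  · intro I hI; exact (Finset.mem_filter.mp hI).2.2
  · refine ⟨{b}, Finset.mem_filter.mpr ⟨hB.2.2 b, ?_, by simp⟩⟩
    intro x hx
    rw [Finset.mem_singleton] at hx
    subst hx
    rw [mem_prefixSet]

lemma mem_downSet {R : Finset (Fin n × Fin n)} {x b : Fin n} :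
    x ∈ downSet R b ↔ (x, b) ∈ R := by simp [downSet]


lemma rel_isBTree {B : Finset (Finset (Fin n))} (hB : IsBuildingSet B)
    (hconn : (Finset.univ : Finset (Fin n)) ∈ B) (hn : 1 ≤ n)
    (w : Equiv.Perm (Fin n)) : IsBTree B (Rel B w) := by
  refine ⟨rel_refl hB w, fun a b h1 h2 => rel_antisymm h1 h2,
    fun a b c h1 h2 => rel_trans hB h1 h2, ?_, fun a b c h1 h2 => rel_upchain hB h1 h2,
    downSet_Rel_mem hB, ?_⟩
  · -- greatest element
    have hlast : ∀ j : Fin n, j ≤ (⟨n - 1, by omega⟩ : Fin n) := by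
      intro j
      exact Fin.le_def.mpr (Nat.le_pred_of_lt j.isLt)
    refine ⟨w ⟨n - 1, by omega⟩, fun a => ?_⟩
    refine mem_Rel.mpr ⟨Finset.univ, hconn, ?_, Finset.mem_univ _, Finset.mem_univ _⟩
    intro x _
    rw [mem_prefixSet]
    simp only [Equiv.symm_apply_apply]
    exact hlast _
  · -- no union of downsets of incomparable elements
    intro S hcard hinc hUB
    have hSpos : 0 < S.card := by omega
    obtain ⟨s0, hs0, hmax⟩ := Finset.exists_max_image S (fun s => (w.symm s : ℕ))
      (Finset.card_pos.mp hSpos)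
    obtain ⟨s1, hs1, hne⟩ := Finset.exists_mem_ne (show 1 < S.card by omega) s0
    have hsub : S.biUnion (downSet (Rel B w)) ⊆ prefixSet w (w.symm s0) := by
      intro z hz
      obtain ⟨s, hs, hzs⟩ := Finset.mem_biUnion.mp hz
      rw [mem_downSet] at hzs
      rw [mem_prefixSet]
      have h1 : (w.symm z : ℕ) ≤ (w.symm s : ℕ) := rel_pos_le hzs
      have h2 := hmax s hs
      exact Fin.le_def.mpr (by omega)
    have hs0U : s0 ∈ S.biUnion (downSet (Rel B w)) :=
      Finset.mem_biUnion.mpr ⟨s0, hs0, mem_downSet.mpr (rel_refl hB w s0)⟩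
    have hs1U : s1 ∈ S.biUnion (downSet (Rel B w)) :=
      Finset.mem_biUnion.mpr ⟨s1, hs1, mem_downSet.mpr (rel_refl hB w s1)⟩
    have : (s1, s0) ∈ Rel B w :=
      mem_Rel.mpr ⟨S.biUnion (downSet (Rel B w)), hUB, hsub, hs0U, hs1U⟩
    exact (hinc s1 hs1 s0 hs0 hne).1 this

/-- For a `B`-permutation, the maximum of each prefix is below the last element
of the prefix in the tree order. -/
lemma bperm_max {B : Finset (Finset (Fin n))} {w : Equiv.Perm (Fin n)}
    (hw : IsBPerm B w) (i : Fin n) :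
    ((prefixSet w i).max' (prefixSet_nonempty w i), w i) ∈ Rel B w := by
  obtain ⟨I, hI, hsub, hwI, mm, hmI, hmax⟩ := hw i
  have hmm : mm = (prefixSet w i).max' (prefixSet_nonempty w i) := by
    refine le_antisymm (Finset.le_max' _ _ (hsub hmI)) (Finset.max'_le _ _ _ hmax)
  rw [← hmm]
  refine mem_Rel.mpr ⟨I, hI, ?_, hwI, hmI⟩
  rwa [Equiv.symm_apply_apply]


lemma max'_congr {s t : Finset (Fin n)} (h : s = t) (hs : s.Nonempty) (ht : t.Nonempty) :
    s.max' hs = t.max' ht := by subst h; rfl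

lemma prefixSet_eq_compl (w : Equiv.Perm (Fin n)) (i : Fin n) :
    prefixSet w i = Finset.univ \ ((Finset.univ.filter fun j => i < j).image w) := by
  ext x
  rw [mem_prefixSet, Finset.mem_sdiff]
  constructor
  · intro hx
    refine ⟨Finset.mem_univ _, fun hmem => ?_⟩
    obtain ⟨j, hj, hjx⟩ := Finset.mem_image.mp hmem
    have hj' : i < j := (Finset.mem_filter.mp hj).2
    rw [← hjx, Equiv.symm_apply_apply] at hx
    exact absurd hj' (not_lt.mpr hx)
  · rintro ⟨-, hx⟩
    by_contra hc
    exact hx (Finset.mem_image.mpr ⟨w.symm x,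
      Finset.mem_filter.mpr ⟨Finset.mem_univ _, not_le.mp hc⟩, w.apply_symm_apply x⟩)

lemma rel_injective {B : Finset (Finset (Fin n))} (hB : IsBuildingSet B)
    {w v : Equiv.Perm (Fin n)} (hw : IsBPerm B w) (hv : IsBPerm B v)
    (h : Rel B w = Rel B v) : w = v := by
  by_contra hne
  have hD : (Finset.univ.filter fun i : Fin n => w i ≠ v i).Nonempty := by
    rw [Finset.filter_nonempty_iff]
    by_contra hc
    push_neg at hc
    exact hne (Equiv.ext fun i => hc i (Finset.mem_univ i))
  set D := Finset.univ.filter fun i : Fin n => w i ≠ v i with hDdef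
  set i := D.max' hD with hidef
  have hiD : i ∈ D := D.max'_mem hD
  have hiw : w i ≠ v i := (Finset.mem_filter.mp hiD).2
  have hgt : ∀ j : Fin n, i < j → w j = v j := by
    intro j hj
    by_contra hc
    have : j ∈ D := Finset.mem_filter.mpr ⟨Finset.mem_univ _, hc⟩
    exact absurd (D.le_max' j this) (not_le.mpr hj)
  have hSeq : prefixSet w i = prefixSet v i := by
    rw [prefixSet_eq_compl, prefixSet_eq_compl]
    congr 1
    exact Finset.image_congr fun x hx => hgt x (Finset.mem_filter.mp hx).2
  have h1 := bperm_max hw i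
  have h2 := bperm_max hv i
  rw [max'_congr hSeq.symm (prefixSet_nonempty v i) (prefixSet_nonempty w i), ← h] at h2
  rcases rel_upchain hB h1 h2 with hc | hc
  · have hle1 : w.symm (w i) ≤ w.symm (v i) := rel_pos_le hc
    have hvi : v i ∈ prefixSet w i := hSeq ▸ self_mem_prefixSet i
    have hle2 : w.symm (v i) ≤ i := mem_prefixSet.mp hvi
    rw [Equiv.symm_apply_apply] at hle1
    have : w.symm (v i) = i := le_antisymm hle2 hle1
    exact hiw (by have h' := congrArg w this; simp only [Equiv.apply_symm_apply] at h'; exact h'.symm)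
  · rw [h] at hc
    have hle1 : v.symm (v i) ≤ v.symm (w i) := rel_pos_le hc
    have hwi : w i ∈ prefixSet v i := hSeq ▸ self_mem_prefixSet i
    have hle2 : v.symm (w i) ≤ i := mem_prefixSet.mp hwi
    rw [Equiv.symm_apply_apply] at hle1
    have : v.symm (w i) = i := le_antisymm hle2 hle1
    exact hiw (by simpa using congrArg v this)


section Surj

variable {B : Finset (Finset (Fin n))} {R : Finset (Fin n × Fin n)}

lemma chain_top (htrans : ∀ a b c : Fin n, (a, b) ∈ R → (b, c) ∈ R → (a, c) ∈ R)
    (hrefl : ∀ a : Fin n, (a, a) ∈ R) {C : Finset (Fin n)} (hne : C.Nonempty) :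
    (∀ a ∈ C, ∀ b ∈ C, (a, b) ∈ R ∨ (b, a) ∈ R) →
    ∃ t ∈ C, ∀ k ∈ C, (k, t) ∈ R := by
  induction hne using Finset.Nonempty.cons_induction with
  | singleton a =>
      intro _
      exact ⟨a, by simp, fun k hk => by
        rw [Finset.mem_singleton] at hk; subst hk; exact hrefl k⟩
  | cons a s ha hs ih =>
      intro htot
      obtain ⟨t, ht, htop⟩ := ih (fun x hx y hy =>
        htot x (Finset.mem_cons_of_mem hx) y (Finset.mem_cons_of_mem hy))
      rcases htot a (Finset.mem_cons_self a s) t (Finset.mem_cons_of_mem ht) with h | h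
      · refine ⟨t, Finset.mem_cons_of_mem ht, fun k hk => ?_⟩
        rcases Finset.mem_cons.mp hk with rfl | hk
        · exact h
        · exact htop k hk
      · refine ⟨a, Finset.mem_cons_self a s, fun k hk => ?_⟩
        rcases Finset.mem_cons.mp hk with rfl | hk
        · exact hrefl k
        · exact htrans _ _ _ (htop k hk) h

lemma exists_top (hR : IsBTree B R) {S : Finset (Fin n)} {x : Fin n} (hx : x ∈ S) :
    ∃ t, (x, t) ∈ R ∧ t ∈ S ∧ ∀ z ∈ S, (t, z) ∈ R → z = t := by
  obtain ⟨hrefl, hanti, htrans, -, hchain, -, -⟩ := hR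
  have hCne : (S.filter fun c => (x, c) ∈ R).Nonempty :=
    ⟨x, Finset.mem_filter.mpr ⟨hx, hrefl x⟩⟩
  obtain ⟨t, htC, htop⟩ := chain_top htrans hrefl hCne (fun a haC b hbC =>
    hchain x a b (Finset.mem_filter.mp haC).2 (Finset.mem_filter.mp hbC).2)
  obtain ⟨htS, hxt⟩ := Finset.mem_filter.mp htC
  refine ⟨t, hxt, htS, fun z hz htz => ?_⟩
  have hxz : (x, z) ∈ R := htrans _ _ _ hxt htz
  have hzC : z ∈ S.filter fun c => (x, c) ∈ R := Finset.mem_filter.mpr ⟨hz, hxz⟩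
  exact hanti _ _ (htop z hzC) htz

/-- The property of being the element read off at the top of a remaining set. -/
def pickP (R : Finset (Fin n × Fin n)) (S : Finset (Fin n)) (t : Fin n) : Prop :=
  t ∈ S ∧ (∀ z ∈ S, (t, z) ∈ R → z = t) ∧ ∀ hne : S.Nonempty, (S.max' hne, t) ∈ R

noncomputable def pick (R : Finset (Fin n × Fin n)) (d : Fin n) (S : Finset (Fin n)) :
    Fin n :=
  if h : ∃ t, pickP R S t then h.choose else d

lemma pick_spec (hR : IsBTree B R) (d : Fin n) {S : Finset (Fin n)}
    (hSne : S.Nonempty) : pickP R S (pick R d S) := by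
  have hex : ∃ t, pickP R S t := by
    obtain ⟨t, h1, h2, h3⟩ := exists_top hR (S.max'_mem hSne)
    exact ⟨t, h2, h3, fun _ => h1⟩
  rw [pick, dif_pos hex]
  exact hex.choose_spec

noncomputable def seqF (R : Finset (Fin n × Fin n)) (d : Fin n) : ℕ → Finset (Fin n)
  | 0 => Finset.univ
  | k + 1 => (seqF R d k).erase (pick R d (seqF R d k))

lemma seqF_card (hR : IsBTree B R) (d : Fin n) : ∀ k, (seqF R d k).card = n - k := by
  intro k
  induction k with
  | zero => simp [seqF]
  | succ k ih =>
      rcases (seqF R d k).eq_empty_or_nonempty with he | hne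
      · rw [seqF, he]
        simp only [Finset.erase_empty, Finset.card_empty]
        rw [he] at ih
        simp only [Finset.card_empty] at ih
        omega
      · rw [seqF, Finset.card_erase_of_mem (pick_spec hR d hne).1, ih]
        omega

lemma seqF_downclosed (hR : IsBTree B R) (d : Fin n) :
    ∀ k, ∀ a b : Fin n, (a, b) ∈ R → b ∈ seqF R d k → a ∈ seqF R d k := by
  intro k
  induction k with
  | zero => intro a b _ _; simp [seqF]
  | succ k ih =>
      intro a b hab hb
      rw [seqF, Finset.mem_erase] at hb ⊢
      obtain ⟨hbne, hb⟩ := hb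
      refine ⟨?_, ih a b hab hb⟩
      rintro rfl
      exact hbne ((pick_spec hR d ⟨b, hb⟩).2.1 b hb hab)

lemma seqF_antitone (R : Finset (Fin n × Fin n)) (d : Fin n) {j k : ℕ} (h : j ≤ k) :
    seqF R d k ⊆ seqF R d j := by
  induction k with
  | zero => rw [Nat.le_zero.mp h]
  | succ k ih =>
      rcases Nat.lt_or_ge j (k + 1) with hj | hj
      · exact (Finset.erase_subset _ _).trans (ih (by omega))
      · rw [le_antisymm h hj]

noncomputable def wfun (R : Finset (Fin n × Fin n)) (d : Fin n) : Fin n → Fin n :=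
  fun i => pick R d (seqF R d (n - 1 - (i : ℕ)))

lemma seqF_nonempty (hR : IsBTree B R) (d : Fin n) {k : ℕ} (hk : k ≤ n - 1) (hn : 1 ≤ n) :
    (seqF R d k).Nonempty := by
  rw [← Finset.card_pos, seqF_card hR d]
  omega

lemma wfun_mem (hR : IsBTree B R) (d : Fin n) (i : Fin n) :
    wfun R d i ∈ seqF R d (n - 1 - (i : ℕ)) := by
  have hi := i.isLt
  exact (pick_spec hR d (seqF_nonempty hR d (by omega) (by omega))).1

lemma wfun_inj (hR : IsBTree B R) (d : Fin n) : Function.Injective (wfun R d) := by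
  have key : ∀ i j : Fin n, (i : ℕ) < (j : ℕ) → wfun R d i ≠ wfun R d j := by
    intro i j hij
    have hi := i.isLt
    have hj := j.isLt
    have h1 : wfun R d i ∈ seqF R d (n - 1 - (i : ℕ)) := wfun_mem hR d i
    have h2 : seqF R d (n - 1 - (i : ℕ)) ⊆ seqF R d (n - 1 - (j : ℕ) + 1) :=
      seqF_antitone R d (by omega)
    have h3 : wfun R d j ∉ seqF R d (n - 1 - (j : ℕ) + 1) := by
      rw [seqF]
      exact Finset.notMem_erase _ _
    intro he
    exact h3 (he ▸ h2 h1)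
  intro i j he
  rcases lt_trichotomy ((i : ℕ)) ((j : ℕ)) with h | h | h
  · exact absurd he (key i j h)
  · exact Fin.ext h
  · exact absurd he.symm (key j i h)

noncomputable def wEq (hR : IsBTree B R) (d : Fin n) : Equiv.Perm (Fin n) :=
  Equiv.ofBijective (wfun R d) (Finite.injective_iff_bijective.mp (wfun_inj hR d))

lemma wEq_apply (hR : IsBTree B R) (d : Fin n) (i : Fin n) :
    wEq hR d i = wfun R d i := rfl

lemma card_prefixSet (w : Equiv.Perm (Fin n)) (i : Fin n) :
    (prefixSet w i).card = (i : ℕ) + 1 := by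
  rw [prefixSet, Finset.card_image_of_injective _ w.injective]
  rw [show (Finset.univ.filter fun j => j ≤ i) = Finset.Iic i by
    ext x; simp [Finset.mem_Iic]]
  exact Fin.card_Iic i

lemma prefix_wEq (hR : IsBTree B R) (d : Fin n) (i : Fin n) :
    prefixSet (wEq hR d) i = seqF R d (n - 1 - (i : ℕ)) := by
  have hi := i.isLt
  refine Finset.eq_of_subset_of_card_le ?_ ?_
  · intro x hx
    obtain ⟨j, hj, hjx⟩ := Finset.mem_image.mp hx
    have hj' : j ≤ i := (Finset.mem_filter.mp hj).2
    have : wEq hR d j ∈ seqF R d (n - 1 - (j : ℕ)) := wfun_mem hR d j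
    rw [hjx] at this
    exact seqF_antitone R d (by have := Fin.le_def.mp hj'; omega) this
  · rw [card_prefixSet, seqF_card hR d]
    omega

lemma wEq_isBPerm (hB : IsBuildingSet B) (hR : IsBTree B R) (d : Fin n) :
    IsBPerm B (wEq hR d) := by
  intro i
  have hrefl := hR.1
  have hdown := hR.2.2.2.2.2.1
  have hSf : prefixSet (wEq hR d) i = seqF R d (n - 1 - (i : ℕ)) := prefix_wEq hR d i
  have hi := i.isLt
  have hne : (seqF R d (n - 1 - (i : ℕ))).Nonempty := seqF_nonempty hR d (by omega) (by omega)
  refine ⟨downSet R (wEq hR d i), hdown _, ?_, mem_downSet.mpr (hrefl _), ?_⟩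
  · intro z hz
    rw [mem_downSet] at hz
    rw [hSf]
    have hw : wEq hR d i ∈ seqF R d (n - 1 - (i : ℕ)) := wfun_mem hR d i
    exact seqF_downclosed hR d _ z _ hz hw
  · refine ⟨(prefixSet (wEq hR d) i).max' (prefixSet_nonempty _ i), ?_,
      fun x hx => Finset.le_max' _ x hx⟩
    rw [mem_downSet]
    have h2 := (pick_spec hR d hne).2.2 hne
    have hmx : (prefixSet (wEq hR d) i).max' (prefixSet_nonempty _ i)
        = (seqF R d (n - 1 - (i : ℕ))).max' hne := max'_congr hSf _ _
    rw [hmx]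
    exact h2

lemma union_downsets (hB : IsBuildingSet B) {I : Finset (Fin n)} (hI : I ∈ B)
    (hdown : ∀ t : Fin n, downSet R t ∈ B) (F : Finset (Fin n)) :
    (∀ t ∈ F, ((downSet R t) ∩ I).Nonempty) → I ∪ F.biUnion (downSet R) ∈ B := by
  induction F using Finset.induction with
  | empty => simpa using hI
  | @insert t F htF ih =>
      intro hF
      have hprev := ih (fun t' ht' => hF t' (Finset.mem_insert_of_mem ht'))
      have heq : I ∪ (insert t F).biUnion (downSet R)
          = (downSet R t) ∪ (I ∪ F.biUnion (downSet R)) := by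
        ext x
        simp only [Finset.mem_union, Finset.mem_biUnion, Finset.mem_insert]
        constructor
        · rintro (hx | ⟨s, (rfl | hs), hxs⟩)
          · right; left; exact hx
          · left; exact hxs
          · right; right; exact ⟨s, hs, hxs⟩
        · rintro (hx | hx | ⟨s, hs, hxs⟩)
          · right; exact ⟨t, Or.inl rfl, hx⟩
          · left; exact hx
          · right; exact ⟨s, Or.inr hs, hxs⟩
      rw [heq]
      refine hB.2.1 _ (hdown t) _ hprev ?_
      obtain ⟨x, hx⟩ := hF t (Finset.mem_insert_self t F)
      rw [Finset.mem_inter] at hx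
      exact ⟨x, Finset.mem_inter.mpr ⟨hx.1, Finset.mem_union_left _ hx.2⟩⟩

lemma rel_wEq (hB : IsBuildingSet B) (hR : IsBTree B R) (d : Fin n) :
    Rel B (wEq hR d) = R := by
  have hrefl := hR.1
  have hdown := hR.2.2.2.2.2.1
  have hnu := hR.2.2.2.2.2.2
  ext ⟨a, b⟩
  set w := wEq hR d with hwdef
  constructor
  · -- from Rel to R
    intro h
    obtain ⟨I, hI, hsub, hbI, haI⟩ := mem_Rel.mp h
    set k := w.symm b with hkdef
    set S := prefixSet w k with hSdef
    have hSf : S = seqF R d (n - 1 - (k : ℕ)) := prefix_wEq hR d k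
    have hbS : b ∈ S := by
      rw [hSdef, hkdef]
      have := self_mem_prefixSet (w := w) k
      rwa [Equiv.apply_symm_apply] at this
    have hbmax : ∀ z ∈ S, (b, z) ∈ R → z = b := by
      have hk := k.isLt
      have hne : (seqF R d (n - 1 - (k : ℕ))).Nonempty :=
        seqF_nonempty hR d (by omega) (by omega)
      have hpick := (pick_spec hR d hne).2.1
      have hb : b = pick R d (seqF R d (n - 1 - (k : ℕ))) := by
        have h1 : w k = pick R d (seqF R d (n - 1 - (k : ℕ))) := rfl
        rw [← h1, hkdef, Equiv.apply_symm_apply]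
      intro z hz
      rw [hSf] at hz
      rw [hb]
      exact hpick z hz
    by_contra hab
    -- the set of tops of S dominating some element of I
    set F := S.filter (fun t => (∀ z ∈ S, (t, z) ∈ R → z = t) ∧ ∃ x ∈ I, (x, t) ∈ R)
      with hFdef
    have htop : ∀ x ∈ I, ∃ t ∈ F, (x, t) ∈ R := by
      intro x hx
      obtain ⟨t, h1, h2, h3⟩ := exists_top hR (hsub hx)
      exact ⟨t, Finset.mem_filter.mpr ⟨h2, h3, x, hx, h1⟩, h1⟩
    have hbF : b ∈ F := Finset.mem_filter.mpr ⟨hbS, hbmax, b, hbI, hrefl b⟩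
    obtain ⟨t, htF, hat⟩ := htop a haI
    have htb : t ≠ b := by
      rintro rfl
      exact hab hat
    -- F has two distinct, pairwise incomparable elements
    have hinc : ∀ x ∈ F, ∀ y ∈ F, x ≠ y → (x, y) ∉ R ∧ (y, x) ∉ R := by
      intro x hx y hy hxy
      obtain ⟨hxS, hxmax, -⟩ := Finset.mem_filter.mp hx
      obtain ⟨hyS, hymax, -⟩ := Finset.mem_filter.mp hy
      exact ⟨fun hc => hxy (hxmax y hyS hc).symm, fun hc => hxy (hymax x hxS hc)⟩
    have hcard : 2 ≤ F.card := Finset.one_lt_card.mpr ⟨t, htF, b, hbF, htb⟩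
    have hsubU : I ⊆ F.biUnion (downSet R) := by
      intro x hx
      obtain ⟨t', ht', hxt'⟩ := htop x hx
      exact Finset.mem_biUnion.mpr ⟨t', ht', mem_downSet.mpr hxt'⟩
    have hUB : F.biUnion (downSet R) ∈ B := by
      have := union_downsets hB hI hdown F (fun t' ht' => by
        obtain ⟨-, -, x, hx, hxt'⟩ := Finset.mem_filter.mp ht'
        exact ⟨x, Finset.mem_inter.mpr ⟨mem_downSet.mpr hxt', hx⟩⟩)
      rwa [Finset.union_eq_right.mpr hsubU] at this
    exact hnu F hcard hinc hUB
  · -- from R to Rel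
    intro h
    refine mem_Rel.mpr ⟨downSet R b, hdown b, ?_, mem_downSet.mpr (hrefl b), mem_downSet.mpr h⟩
    intro z hz
    rw [mem_downSet] at hz
    rw [prefix_wEq hR d]
    have hb : b ∈ seqF R d (n - 1 - ((w.symm b : Fin n) : ℕ)) := by
      have := wfun_mem hR d (w.symm b)
      rwa [← wEq_apply hR, ← hwdef, Equiv.apply_symm_apply] at this
    exact seqF_downclosed hR d _ z b hz hb

end Surj


section Descents

variable {B : Finset (Finset (Fin n))} {w : Equiv.Perm (Fin n)}

lemma covering_of_next (hB : IsBuildingSet B) (hw : IsBPerm B w) {i j : Fin n}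
    (hj : (j : ℕ) = (i : ℕ) + 1)
    (hb : w j < (prefixSet w i).max' (prefixSet_nonempty w i)) :
    (w i, w j) ∈ Rel B w ∧ w i ≠ w j ∧
      ∀ c : Fin n, (w i, c) ∈ Rel B w → (c, w j) ∈ Rel B w → c = w i ∨ c = w j := by
  set m' := (prefixSet w i).max' (prefixSet_nonempty w i) with hm'def
  have h1 : (m', w i) ∈ Rel B w := bperm_max hw i
  have hins : prefixSet w j = insert (w j) (prefixSet w i) := by
    ext x
    rw [mem_prefixSet, Finset.mem_insert, mem_prefixSet]
    constructor
    · intro hx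
      rcases eq_or_ne (w.symm x) j with he | hne
      · left; rw [← he, Equiv.apply_symm_apply]
      · right
        have h1 := Fin.le_def.mp hx
        have h2 : (w.symm x : ℕ) ≠ (j : ℕ) := fun hc => hne (Fin.ext hc)
        exact Fin.le_def.mpr (by omega)
    · rintro (rfl | hx)
      · simp
      · exact Fin.le_def.mpr (by have := Fin.le_def.mp hx; omega)
  have hmx : (prefixSet w j).max' (prefixSet_nonempty w j) = m' := by
    rw [max'_congr hins (prefixSet_nonempty w j) (Finset.insert_nonempty _ _)]
    refine le_antisymm (Finset.max'_le _ _ _ ?_) (Finset.le_max' _ _ ?_)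
    · intro y hy
      rcases Finset.mem_insert.mp hy with rfl | hy
      · exact hb.le
      · exact Finset.le_max' _ _ hy
    · exact Finset.mem_insert_of_mem (Finset.max'_mem _ _)
  have h2 : (m', w j) ∈ Rel B w := by
    have := bperm_max hw j
    rwa [hmx] at this
  have hij : (i : ℕ) < (j : ℕ) := by omega
  have hmain : (w i, w j) ∈ Rel B w := by
    rcases rel_upchain hB h1 h2 with hc | hc
    · exact hc
    · exfalso
      have := rel_pos_le hc
      simp only [Equiv.symm_apply_apply] at this
      exact absurd (Fin.le_def.mp this) (by omega)
  have hne : w i ≠ w j := fun he => by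
    have := w.injective he
    subst this
    omega
  refine ⟨hmain, hne, fun c hc1 hc2 => ?_⟩
  rcases eq_or_ne c (w j) with he | hcb
  · exact Or.inr he
  · left
    have hcj : w.symm c ≤ j := by
      have := rel_pos_le hc2
      simpa using this
    have hcjne : (w.symm c : ℕ) ≠ (j : ℕ) := by
      intro hc'
      exact hcb (by rw [← Equiv.apply_symm_apply w c, Fin.ext hc'])
    have hic : i ≤ w.symm c := by
      have := rel_pos_le hc1
      simpa using this
    have : w.symm c = i := by
      have h1 := Fin.le_def.mp hcj
      have h2 := Fin.le_def.mp hic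
      exact Fin.ext (by omega)
    rw [← Equiv.apply_symm_apply w c, this]

lemma parent_next (hB : IsBuildingSet B) (hch : IsChordal B) (hw : IsBPerm B w)
    {x y : Fin n} (hxy : (x, y) ∈ Rel B w) (hne : x ≠ y)
    (hcov : ∀ c : Fin n, (x, c) ∈ Rel B w → (c, y) ∈ Rel B w → c = x ∨ c = y)
    (hlt : y < x) : (w.symm y : ℕ) = (w.symm x : ℕ) + 1 := by
  set i := w.symm x with hidef
  set k := w.symm y with hkdef
  have hwx : w i = x := Equiv.apply_symm_apply w x
  have hwy : w k = y := Equiv.apply_symm_apply w y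
  have hik : (i : ℕ) < (k : ℕ) := by
    have h1 : i ≤ k := rel_pos_le hxy
    have h2 : i ≠ k := fun hc => hne (by rw [← hwx, ← hwy, hc])
    have := Fin.le_def.mp h1
    have : (i : ℕ) ≠ (k : ℕ) := fun hc => h2 (Fin.ext hc)
    omega
  by_contra hk1
  have hik2 : (i : ℕ) + 1 < (k : ℕ) := by omega
  have hkn := k.isLt
  set j : Fin n := ⟨(i : ℕ) + 1, by omega⟩ with hjdef
  set b := w j with hbdef
  have hjval : (j : ℕ) = (i : ℕ) + 1 := rfl
  -- Step 1 : x is not below b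
  have hxb : (x, b) ∉ Rel B w := by
    intro hc
    rcases rel_upchain hB hc hxy with hby | hyb
    · rcases hcov b hc hby with hbx | hby'
      · have : j = i := by
          rw [← hwx] at hbx
          exact w.injective hbx
        have := congrArg Fin.val this
        omega
      · have : j = k := by
          rw [← hwy] at hby'
          exact w.injective hby'
        have := congrArg Fin.val this
        omega
    · have := Fin.le_def.mp (rel_pos_le hyb)
      rw [hbdef] at this
      simp only [Equiv.symm_apply_apply] at this
      omega
  -- Step 2 : b is larger than the max of the prefix at i
  set m' := (prefixSet w i).max' (prefixSet_nonempty w i) with hm'def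
  have hbm : m' < b := by
    rcases lt_trichotomy b m' with h | h | h
    · exfalso
      rw [← hwx] at hxb
      exact hxb (covering_of_next hB hw hjval h).1
    · exfalso
      have : b ∈ prefixSet w i := h ▸ Finset.max'_mem _ _
      have := Fin.le_def.mp (mem_prefixSet.mp this)
      rw [hbdef] at this
      simp only [Equiv.symm_apply_apply] at this
      omega
    · exact h
  -- Step 3 : the max of the prefix at k
  set M := (prefixSet w k).max' (prefixSet_nonempty w k) with hMdef
  have hMy : (M, y) ∈ Rel B w := by
    have := bperm_max hw k
    rwa [hwy] at this
  have hbM : b ≤ M := by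
    refine Finset.le_max' _ b (mem_prefixSet.mpr ?_)
    rw [hbdef]
    simp only [Equiv.symm_apply_apply]
    exact Fin.le_def.mpr (by omega)
  -- Step 4 : chordality
  have hxD : x ∈ downSet (Rel B w) y := mem_downSet.mpr hxy
  set U := (downSet (Rel B w) y).filter (fun z => x ≤ z) with hUdef
  have hU : U ∈ B := hch _ (downSet_Rel_mem hB y) x hxD
  have hxU : x ∈ U := Finset.mem_filter.mpr ⟨hxD, le_refl x⟩
  obtain ⟨q, hqU, hqmax⟩ := Finset.exists_max_image U (fun z => (w.symm z : ℕ)) ⟨x, hxU⟩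
  have hxq : (x, q) ∈ Rel B w := by
    refine mem_Rel.mpr ⟨U, hU, ?_, hqU, hxU⟩
    intro z hz
    exact mem_prefixSet.mpr (Fin.le_def.mpr (hqmax z hz))
  have hqy : (q, y) ∈ Rel B w := mem_downSet.mp (Finset.mem_filter.mp hqU).1
  have hq : q = x := by
    rcases hcov q hxq hqy with h | h
    · exact h
    · exfalso
      have : x ≤ q := (Finset.mem_filter.mp hqU).2
      rw [h] at this
      exact absurd hlt (not_lt.mpr this)
  -- Step 5 : contradiction
  have hxm : x ≤ m' := by
    refine Finset.le_max' _ x (mem_prefixSet.mpr ?_)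
    rw [← hidef]
  have hMU : M ∈ U := Finset.mem_filter.mpr ⟨mem_downSet.mpr hMy,
    le_of_lt (lt_of_le_of_lt hxm (lt_of_lt_of_le hbm hbM))⟩
  have hMq := hqmax M hMU
  rw [hq, ← hidef] at hMq
  have hMp : M ∈ prefixSet w i := mem_prefixSet.mpr (Fin.le_def.mpr hMq)
  have : M ≤ m' := Finset.le_max' _ M hMp
  have h1 := Fin.lt_def.mp hbm
  have h2 := Fin.le_def.mp hbM
  have h3 := Fin.le_def.mp this
  omega

lemma desTree_rel_eq_des (hB : IsBuildingSet B) (hch : IsChordal B)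
    (hw : IsBPerm B w) (hn : 1 ≤ n) : desTree (Rel B w) = des w := by
  rw [desTree, des]
  refine (Finset.card_bij'
    (fun i _ => (w i, w (⟨min ((i : ℕ) + 1) (n - 1), by omega⟩ : Fin n)))
    (fun p _ => w.symm p.1) ?_ ?_ ?_ ?_).symm
  · -- maps descents of w to descent covers of the tree
    intro i hi
    obtain ⟨-, j, hj, hlt⟩ := Finset.mem_filter.mp hi
    have hjn := j.isLt
    have hnxt : (⟨min ((i : ℕ) + 1) (n - 1), by omega⟩ : Fin n) = j :=
      Fin.ext (by simp only [Fin.val_mk]; omega)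
    rw [hnxt]
    have hb : w j < (prefixSet w i).max' (prefixSet_nonempty w i) :=
      lt_of_lt_of_le hlt (Finset.le_max' _ _ (self_mem_prefixSet i))
    obtain ⟨hmem, hne, hcov⟩ := covering_of_next hB hw hj hb
    exact Finset.mem_filter.mpr ⟨Finset.mem_univ _, hmem, hne, hcov, hlt⟩
  · -- maps descent covers of the tree to descents of w
    intro p hp
    obtain ⟨-, hmem, hne, hcov, hlt⟩ := Finset.mem_filter.mp hp
    have hpn := parent_next hB hch hw hmem hne hcov hlt
    refine Finset.mem_filter.mpr ⟨Finset.mem_univ _, w.symm p.2, hpn, ?_⟩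
    simpa using hlt
  · intro i hi
    simp
  · intro p hp
    obtain ⟨-, hmem, hne, hcov, hlt⟩ := Finset.mem_filter.mp hp
    have hpn := parent_next hB hch hw hmem hne hcov hlt
    have h2n := (w.symm p.2).isLt
    have hnxt : (⟨min ((w.symm p.1 : ℕ) + 1) (n - 1), by omega⟩ : Fin n) = w.symm p.2 :=
      Fin.ext (by simp only [Fin.val_mk]; omega)
    rw [hnxt]
    simp

end Descents

end BTreeProof

/-- For a connected chordal building set `B` on `[n]`, the descent generating
function over `B`-trees equals the descent generating function over
`B`-permutations (both are the `h`-polynomial of the nestohedron `P_B`). -/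
theorem btrees_eq_bperms_descents (n : ℕ) (hn : 1 ≤ n)
    (B : Finset (Finset (Fin n))) (hB : IsBuildingSet B)
    (hconn : (Finset.univ : Finset (Fin n)) ∈ B) (hch : IsChordal B) :
    ∑ R ∈ Finset.univ.filter (fun R : Finset (Fin n × Fin n) => IsBTree B R),
        (X : Polynomial ℤ) ^ desTree R
      = ∑ w ∈ Finset.univ.filter (fun w : Equiv.Perm (Fin n) => IsBPerm B w),
          (X : Polynomial ℤ) ^ des w := by
  refine (Finset.sum_bij (fun (w : Equiv.Perm (Fin n)) _ => BTreeProof.Rel B w)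
    ?_ ?_ ?_ ?_).symm
  · intro w hw
    exact Finset.mem_filter.mpr ⟨Finset.mem_univ _, BTreeProof.rel_isBTree hB hconn hn w⟩
  · intro w1 h1 w2 h2 heq
    exact BTreeProof.rel_injective hB (Finset.mem_filter.mp h1).2
      (Finset.mem_filter.mp h2).2 heq
  · intro R hR
    have hR' : IsBTree B R := (Finset.mem_filter.mp hR).2
    refine ⟨BTreeProof.wEq hR' ⟨0, by omega⟩, Finset.mem_filter.mpr
      ⟨Finset.mem_univ _, BTreeProof.wEq_isBPerm hB hR' _⟩, BTreeProof.rel_wEq hB hR' _⟩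
  · intro w hw
    rw [BTreeProof.desTree_rel_eq_des hB hch (Finset.mem_filter.mp hw).2 hn]
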